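/- arXiv:2009.03634 — 2 statements merged into one kernel-verified Lean document; each statement's English description precedes it below -/
import Mathlib

section
/- In the sequential scheduling game on m unrelated machines where players have k-lookahead (k ≥ 1), every k-lookahead play of all n jobs starting from zero initial loads has makespan at most (m·k·2^k + m)·OPT; in particular the sequential price of anarchy is O(m·k·2^k). -/
/-!
Sequential scheduling game on `m` unrelated machines with `k`-lookahead players.
Machines are indexed by `Fin m`, jobs by natural numbers (a block `[a:b]` of jobs plays
in the order `a, a+1, …, b`), and `p i j` is the processing time of job `j` on machine `i`.
-/

/-- Add the processing time of job `j` on machine `i` to the load vector `D`. -/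
def bump {m : ℕ} (p : Fin m → ℕ → ℝ) (D : Fin m → ℝ) (i : Fin m) (j : ℕ) : Fin m → ℝ :=
  fun i' => D i' + if i' = i then p i j else 0

/-- `Out p D js F`: `F` is the final load vector of some backward-induction
(subgame-perfect, ties broken arbitrarily) play of the finite extensive game in which
the jobs in `js` choose machines in order, starting from loads `D`; the payoff of each
job is the load, after all of these moves, of the machine it chose. -/
inductive Out {m : ℕ} (p : Fin m → ℕ → ℝ) : (Fin m → ℝ) → List ℕ → (Fin m → ℝ) → Prop
  | nil (D : Fin m → ℝ) : Out p D [] D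
  | cons (D : Fin m → ℝ) (j : ℕ) (js : List ℕ) (i : Fin m) (cont : Fin m → Fin m → ℝ)
      (hcont : ∀ i', Out p (bump p D i' j) js (cont i'))
      (hopt : ∀ i', cont i i ≤ cont i' i') :
      Out p D (j :: js) (cont i)

/-- `i` is an optimal root move, for the root job `j` followed by the jobs `js`,
of the lookahead game starting from loads `D`, solved by backward induction
(ties broken arbitrarily). -/
def RootMove {m : ℕ} (p : Fin m → ℕ → ℝ) (D : Fin m → ℝ) (j : ℕ) (js : List ℕ)
    (i : Fin m) : Prop :=
  ∃ cont : Fin m → Fin m → ℝ,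
    (∀ i', Out p (bump p D i' j) js (cont i')) ∧ (∀ i', cont i i ≤ cont i' i')

/-- `Play p k D a b F`: starting from initial loads `D`, the block `[a:b]` of jobs plays a
`k`-lookahead play resulting in final loads `F`: the first remaining job `a` makes an
optimal root move of the lookahead game on jobs `a, a+1, …, min (a+k) b`, its processing
time is added to the chosen machine, and the remaining jobs continue. -/
inductive Play {m : ℕ} (p : Fin m → ℕ → ℝ) (k : ℕ) :
    (Fin m → ℝ) → ℕ → ℕ → (Fin m → ℝ) → Prop
  | nil (D : Fin m → ℝ) (a b : ℕ) (h : b < a) : Play p k D a b D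
  | cons (D : Fin m → ℝ) (a b : ℕ) (i : Fin m) (F : Fin m → ℝ) (hab : a ≤ b)
      (hroot : RootMove p D a (List.range' (a + 1) (min (a + k) b - a)) i)
      (hplay : Play p k (bump p D i a) (a + 1) b F) :
      Play p k D a b F

/-- Maximum load of a load vector. -/
noncomputable def maxLoad {m : ℕ} (D : Fin m → ℝ) : ℝ := ⨆ i, D i

/-- `ΔL([a:b])`: the maximum possible increase of the makespan caused by the block
`[a:b]` of jobs, over all nonnegative initial loads and all `k`-lookahead plays. -/
noncomputable def deltaL {m : ℕ} (p : Fin m → ℕ → ℝ) (k a b : ℕ) : ℝ :=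
  sSup {x | ∃ D F : Fin m → ℝ,
    (∀ i, 0 ≤ D i) ∧ Play p k D a b F ∧ x = maxLoad F - maxLoad D}

/-- Minimum processing time of job `j`. -/
noncomputable def pmin {m : ℕ} (p : Fin m → ℕ → ℝ) (j : ℕ) : ℝ := ⨅ i, p i j

/-- Makespan of an arbitrary schedule `τ` of jobs `1, …, n` on `m` machines. -/
noncomputable def makespanM {m : ℕ} (n : ℕ) (p : Fin m → ℕ → ℝ) (τ : ℕ → Fin m) : ℝ :=
  ⨆ i, ∑ j ∈ Finset.Icc 1 n, if τ j = i then p i j else 0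

/-- Optimal (minimum) makespan over all schedules of jobs `1, …, n`. -/
noncomputable def OPTm {m : ℕ} (n : ℕ) (p : Fin m → ℕ → ℝ) : ℝ :=
  sInf {x | ∃ τ : ℕ → Fin m, x = makespanM n p τ}

/-! ### Auxiliary machinery for the proof -/

/-- Recursive bound for the makespan increase of a backward-induction play. -/
noncomputable def outBound {m : ℕ} (p : Fin m → ℕ → ℝ) : List ℕ → ℝ
  | [] => 0
  | j :: js => pmin p j + 2 * outBound p js

section Aux

variable {m : ℕ} {p : Fin m → ℕ → ℝ}

lemma pmin_nonneg [Nonempty (Fin m)] (hp : ∀ i j, 0 ≤ p i j) (j : ℕ) : 0 ≤ pmin p j :=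
  le_ciInf fun i => hp i j

lemma pmin_le (i : Fin m) (j : ℕ) : pmin p j ≤ p i j :=
  ciInf_le (Set.Finite.bddBelow (Set.finite_range _)) i

lemma outBound_nonneg [Nonempty (Fin m)] (hp : ∀ i j, 0 ≤ p i j) :
    ∀ js, 0 ≤ outBound p js
  | [] => le_refl 0
  | j :: js => by
      have h1 := outBound_nonneg hp js
      have h2 := pmin_nonneg hp j
      simp only [outBound]; linarith

lemma le_maxLoad (D : Fin m → ℝ) (i : Fin m) : D i ≤ maxLoad D :=
  le_ciSup (Set.Finite.bddAbove (Set.finite_range D)) i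

lemma maxLoad_le [Nonempty (Fin m)] {D : Fin m → ℝ} {c : ℝ} (h : ∀ i, D i ≤ c) :
    maxLoad D ≤ c := ciSup_le h

lemma Out.mono (hp : ∀ i j, 0 ≤ p i j) {D F : Fin m → ℝ} {js : List ℕ}
    (h : Out p D js F) : ∀ i', D i' ≤ F i' := by
  induction h with
  | nil D => exact fun _ => le_refl _
  | cons D j js i cont hcont hopt ih =>
      intro i'
      refine le_trans ?_ (ih i i')
      simp only [bump]
      have : (0:ℝ) ≤ if i' = i then p i j else 0 := by
        split_ifs
        · exact hp _ _
        · exact le_refl 0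
      linarith

/-- Key step: an optimal root move cannot push the max load above
`maxLoad D + pmin j + outBound js`. -/
lemma key_step [Nonempty (Fin m)] (hp : ∀ i j, 0 ≤ p i j) {D : Fin m → ℝ} {j : ℕ}
    {js : List ℕ} {i : Fin m} {cont : Fin m → Fin m → ℝ}
    (hcont : ∀ i', Out p (bump p D i' j) js (cont i'))
    (hA : ∀ i', maxLoad (cont i') ≤ maxLoad (bump p D i' j) + outBound p js)
    (hopt : ∀ i', cont i i ≤ cont i' i') :
    maxLoad (bump p D i j) ≤ maxLoad D + pmin p j + outBound p js := by
  obtain ⟨i0, hi0⟩ := Finite.exists_min (fun i' => p i' j)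
  have hstar : p i0 j ≤ pmin p j := le_ciInf hi0
  have hob := outBound_nonneg hp js
  have hpm := pmin_nonneg hp j
  have hb0 : maxLoad (bump p D i0 j) ≤ maxLoad D + pmin p j := by
    apply maxLoad_le
    intro i'
    have hD := le_maxLoad D i'
    simp only [bump]
    split_ifs with h
    · linarith
    · linarith
  have h1 : bump p D i j i ≤ cont i i := Out.mono hp (hcont i) i
  have h2 : cont i i ≤ cont i0 i0 := hopt i0
  have h3 : cont i0 i0 ≤ maxLoad (cont i0) := le_maxLoad _ _
  have h4 : maxLoad (cont i0) ≤ maxLoad D + pmin p j + outBound p js := by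
    have := hA i0; linarith
  have h5 : D i + p i j ≤ maxLoad D + pmin p j + outBound p js := by
    have hb : bump p D i j i = D i + p i j := by simp [bump]
    rw [hb] at h1; linarith
  apply maxLoad_le
  intro i'
  have hD := le_maxLoad D i'
  simp only [bump]
  split_ifs with h
  · subst h; linarith
  · linarith

/-- Bound on the makespan increase of a backward-induction play. -/
lemma out_bound [Nonempty (Fin m)] (hp : ∀ i j, 0 ≤ p i j) {D F : Fin m → ℝ}
    {js : List ℕ} (h : Out p D js F) :
    maxLoad F ≤ maxLoad D + outBound p js := by
  induction h with
  | nil D => simp [outBound]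
  | cons D j js i cont hcont hopt ih =>
      have hkey := key_step hp hcont (fun i' => ih i') hopt
      have := ih i
      simp only [outBound]
      linarith

lemma outBound_range' : ∀ (w c : ℕ),
    outBound p (List.range' c w) = ∑ t ∈ Finset.range w, 2 ^ t * pmin p (c + t)
  | 0, c => by simp [outBound]
  | (w+1), c => by
      rw [List.range'_succ, Finset.sum_range_succ']
      simp only [outBound, pow_zero, one_mul, Nat.add_zero]
      rw [outBound_range' w (c+1), Finset.mul_sum]
      have hc : ∀ t ∈ Finset.range w,
          (2:ℝ) * (2 ^ t * pmin p (c + 1 + t)) = 2 ^ (t + 1) * pmin p (c + (t + 1)) := by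
        intro t _
        rw [show c + 1 + t = c + (t + 1) by omega, pow_succ]
        ring
      rw [Finset.sum_congr rfl hc]
      ring

/-- Main induction: bound on the makespan of a `k`-lookahead play. -/
lemma play_bound [Nonempty (Fin m)] (hp : ∀ i j, 0 ≤ p i j) (k : ℕ)
    {D : Fin m → ℝ} {a b : ℕ} {F : Fin m → ℝ} (h : Play p k D a b F) :
    maxLoad F ≤ maxLoad D + ∑ j ∈ Finset.Icc a b, 2 ^ (min k (j - a)) * pmin p j := by
  induction h with
  | nil D a b h =>
      rw [Finset.Icc_eq_empty (by omega)]
      simp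
  | cons D a b i F hab hroot hplay ih =>
      obtain ⟨cont, hcont, hopt⟩ := hroot
      have hmin1 : min (a + k) b ≤ a + k := min_le_left _ _
      have hmin2 : min (a + k) b ≤ b := min_le_right _ _
      have hmin3 : a ≤ min (a + k) b := le_min (by omega) hab
      have hminc : min (a + k) b = a + k ∨ min (a + k) b = b := min_choice _ _
      set w := min (a + k) b - a with hw
      have hkey : maxLoad (bump p D i a)
          ≤ maxLoad D + pmin p a + outBound p (List.range' (a + 1) w) :=
        key_step hp hcont (fun i' => out_bound hp (hcont i')) hopt
      have hsum : pmin p a + outBound p (List.range' (a + 1) w)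
          + ∑ j ∈ Finset.Icc (a + 1) b, 2 ^ (min k (j - (a + 1))) * pmin p j
          ≤ ∑ j ∈ Finset.Icc a b, 2 ^ (min k (j - a)) * pmin p j := by
        rw [outBound_range']
        have hre : ∑ t ∈ Finset.range w, (2:ℝ) ^ t * pmin p (a + 1 + t)
            = ∑ j ∈ Finset.Icc (a + 1) (a + w), 2 ^ (j - (a + 1)) * pmin p j := by
          rw [← Finset.Ico_add_one_right_eq_Icc, Finset.sum_Ico_eq_sum_range]
          apply Finset.sum_congr (by congr 1; omega)
          intro t _
          congr 2
          omega
        have hsub : Finset.Icc (a + 1) (a + w) ⊆ Finset.Icc (a + 1) b := by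
          apply Finset.Icc_subset_Icc_right; omega
        have hind : ∑ j ∈ Finset.Icc (a + 1) (a + w), (2:ℝ) ^ (j - (a + 1)) * pmin p j
            = ∑ j ∈ Finset.Icc (a + 1) b,
                (if j ≤ a + w then (2:ℝ) ^ (j - (a + 1)) * pmin p j else 0) := by
          rw [← Finset.sum_subset hsub]
          · apply Finset.sum_congr rfl
            intro j hj
            rw [if_pos (Finset.mem_Icc.mp hj).2]
          · intro j hj hj'
            rw [if_neg]
            simp only [Finset.mem_Icc] at hj hj'
            omega
        have hins : Finset.Icc a b = insert a (Finset.Icc (a + 1) b) := by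
          ext x
          simp only [Finset.mem_Icc, Finset.mem_insert]
          omega
        rw [hre, hind, hins, Finset.sum_insert (by simp)]
        rw [show min k (a - a) = 0 by omega, pow_zero, one_mul]
        have hpt : ∀ j ∈ Finset.Icc (a + 1) b,
            (if j ≤ a + w then (2:ℝ) ^ (j - (a + 1)) * pmin p j else 0)
              + 2 ^ (min k (j - (a + 1))) * pmin p j
            ≤ 2 ^ (min k (j - a)) * pmin p j := by
          intro j hj
          simp only [Finset.mem_Icc] at hj
          by_cases hcase : j ≤ a + w
          · rw [if_pos hcase]
            have e1 : min k (j - (a + 1)) = j - (a + 1) := by omega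
            have e2 : min k (j - a) = j - a := by omega
            have e3 : j - a = (j - (a + 1)) + 1 := by omega
            rw [e1, e2, e3, pow_succ]
            apply le_of_eq; ring
          · rw [if_neg hcase]
            have e1 : min k (j - (a + 1)) = k := by omega
            have e2 : min k (j - a) = k := by omega
            rw [e1, e2]
            linarith
        have hsplit : ∑ j ∈ Finset.Icc (a + 1) b,
            ((if j ≤ a + w then (2:ℝ) ^ (j - (a + 1)) * pmin p j else 0)
              + 2 ^ (min k (j - (a + 1))) * pmin p j)
            = (∑ j ∈ Finset.Icc (a + 1) b,
                (if j ≤ a + w then (2:ℝ) ^ (j - (a + 1)) * pmin p j else 0))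
              + ∑ j ∈ Finset.Icc (a + 1) b, 2 ^ (min k (j - (a + 1))) * pmin p j :=
          Finset.sum_add_distrib
        linarith [Finset.sum_le_sum hpt, hsplit]
      linarith [ih, hkey]

end Aux

/-- On `m` unrelated machines with `k`-lookahead players (`k ≥ 1`),
every `k`-lookahead play of all `n` jobs from zero initial loads has makespan at most
`(m·k·2^k + m) · OPT`; in particular the sequential price of anarchy is `O(m·k·2^k)`. -/
theorem spoa_kLookahead_m_machines (m k n : ℕ) (hm : 0 < m) (hk : 1 ≤ k)
    (p : Fin m → ℕ → ℝ) (hp : ∀ i j, 0 ≤ p i j)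
    (F : Fin m → ℝ) (hF : Play p k (fun _ => 0) 1 n F) :
    maxLoad F ≤ ((m : ℝ) * k * 2 ^ k + m) * OPTm n p := by
  haveI : Nonempty (Fin m) := Fin.pos_iff_nonempty.mp hm
  have hmpos : (0:ℝ) < m := Nat.cast_pos.mpr hm
  have hzero : maxLoad (fun _ : Fin m => (0:ℝ)) = 0 := by
    simp [maxLoad]
  -- step 1: the play bound
  have h1 := play_bound hp k hF
  rw [hzero, zero_add] at h1
  -- step 2: coefficients are at most 2^k
  have h2 : ∑ j ∈ Finset.Icc 1 n, (2:ℝ) ^ (min k (j - 1)) * pmin p j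
      ≤ 2 ^ k * ∑ j ∈ Finset.Icc 1 n, pmin p j := by
    rw [Finset.mul_sum]
    apply Finset.sum_le_sum
    intro j _
    apply mul_le_mul_of_nonneg_right _ (pmin_nonneg hp j)
    exact pow_le_pow_right₀ one_le_two (min_le_left _ _)
  -- step 3: sum of pmin is at most m * makespan of any schedule
  have h3 : ∀ τ : ℕ → Fin m, ∑ j ∈ Finset.Icc 1 n, pmin p j ≤ m * makespanM n p τ := by
    intro τ
    have ha : ∑ j ∈ Finset.Icc 1 n, pmin p j ≤ ∑ j ∈ Finset.Icc 1 n, p (τ j) j :=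
      Finset.sum_le_sum fun j _ => pmin_le (τ j) j
    have hb : ∑ j ∈ Finset.Icc 1 n, p (τ j) j
        = ∑ i : Fin m, ∑ j ∈ Finset.Icc 1 n, (if τ j = i then p i j else 0) := by
      rw [Finset.sum_comm]
      apply Finset.sum_congr rfl
      intro j _
      rw [Finset.sum_ite_eq]
      simp
    have hc : ∀ i : Fin m,
        ∑ j ∈ Finset.Icc 1 n, (if τ j = i then p i j else 0) ≤ makespanM n p τ := by
      intro i
      simp only [makespanM]
      exact le_ciSup (f := fun i : Fin m => ∑ j ∈ Finset.Icc 1 n, if τ j = i then p i j else 0)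
        (Set.Finite.bddAbove (Set.finite_range _)) i
    calc ∑ j ∈ Finset.Icc 1 n, pmin p j
        ≤ ∑ i : Fin m, ∑ j ∈ Finset.Icc 1 n, (if τ j = i then p i j else 0) := by
          rw [← hb]; exact ha
      _ ≤ ∑ _i : Fin m, makespanM n p τ := Finset.sum_le_sum fun i _ => hc i
      _ = m * makespanM n p τ := by
          rw [Finset.sum_const, Finset.card_univ, Fintype.card_fin, nsmul_eq_mul]
  -- OPT set nonempty
  have hne : {x | ∃ τ : ℕ → Fin m, x = makespanM n p τ}.Nonempty := by
    refine ⟨makespanM n p fun _ => Classical.arbitrary (Fin m), ?_⟩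
    exact ⟨_, rfl⟩
  -- step 4: sum of pmin ≤ m * OPT
  have h4 : ∑ j ∈ Finset.Icc 1 n, pmin p j ≤ m * OPTm n p := by
    have hlb : (∑ j ∈ Finset.Icc 1 n, pmin p j) / m ≤ OPTm n p := by
      apply le_csInf hne
      rintro x ⟨τ, rfl⟩
      rw [div_le_iff₀ hmpos]
      calc ∑ j ∈ Finset.Icc 1 n, pmin p j ≤ m * makespanM n p τ := h3 τ
        _ = makespanM n p τ * m := mul_comm _ _
    have := mul_le_mul_of_nonneg_left hlb (le_of_lt hmpos)
    rwa [mul_div_cancel₀ _ (ne_of_gt hmpos)] at this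
  -- step 5: OPT ≥ 0
  have h5 : 0 ≤ OPTm n p := by
    apply le_csInf hne
    rintro x ⟨τ, rfl⟩
    have : (0:ℝ) ≤ ∑ j ∈ Finset.Icc 1 n,
        (if τ j = Classical.arbitrary (Fin m) then p (Classical.arbitrary (Fin m)) j else 0) := by
      apply Finset.sum_nonneg
      intro j _
      split_ifs
      · exact hp _ _
      · exact le_refl 0
    refine le_trans this ?_
    simp only [makespanM]
    exact le_ciSup (f := fun i : Fin m => ∑ j ∈ Finset.Icc 1 n, if τ j = i then p i j else 0)
      (Set.Finite.bddAbove (Set.finite_range _)) (Classical.arbitrary (Fin m))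
  -- combine
  have hco : (m:ℝ) * 2 ^ k ≤ (m:ℝ) * k * 2 ^ k + m := by
    have hk1 : (1:ℝ) ≤ (k:ℝ) := by exact_mod_cast hk
    have hpow : (0:ℝ) < 2 ^ k := by positivity
    nlinarith [mul_nonneg (mul_nonneg (le_of_lt hmpos) (sub_nonneg.mpr hk1)) (le_of_lt hpow)]
  calc maxLoad F ≤ ∑ j ∈ Finset.Icc 1 n, (2:ℝ) ^ (min k (j - 1)) * pmin p j := h1
    _ ≤ 2 ^ k * ∑ j ∈ Finset.Icc 1 n, pmin p j := h2
    _ ≤ 2 ^ k * (m * OPTm n p) := by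
        apply mul_le_mul_of_nonneg_left h4 (by positivity)
    _ = ((m:ℝ) * 2 ^ k) * OPTm n p := by ring
    _ ≤ ((m : ℝ) * k * 2 ^ k + m) * OPTm n p := mul_le_mul_of_nonneg_right hco h5
end

section
/- Let m = 2 and let σ be a 1-lookahead equilibrium of a generic instance, meaning that in every comparison of anticipated costs made by any player (both the comparisons defining predicted responses and those defining the players' own choices) the two compared quantities are never equal. If for some job v it holds that D_1(v−1) + p_{1,v} < D_2(v−1) + p_{2,v}, then there exists a job v' with v ≤ v' ≤ n such that σ_{v'} = 1. (Symmetrically, if D_2(v−1) + p_{2,v} < D_1(v−1) + p_{1,v}, then some job v' ∈ {v,…,n} has σ_{v'} = 2.) -/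
/-!
Sequential scheduling game on two unrelated machines, 1-lookahead players.
Machines are indexed by `Fin 2` (index `0` is machine 1, index `1` is machine 2),
jobs are `1, …, n`, and `p i j` is the processing time of job `j` on machine `i`.
-/

/-- `mload p σ i ℓ`: load of machine `i` after the first `ℓ` jobs under schedule `σ`. -/
def mload (p : Fin 2 → ℕ → ℝ) (σ : ℕ → Fin 2) (i : Fin 2) (ℓ : ℕ) : ℝ :=
  ∑ j ∈ Finset.Icc 1 ℓ, if σ j = i then p i j else 0

/-- `Evec p σ j i i'`: the load vector `D(j-1)` with `p i j` added to coordinate `i`,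
evaluated at coordinate `i'`. -/
def Evec (p : Fin 2 → ℕ → ℝ) (σ : ℕ → Fin 2) (j : ℕ) (i i' : Fin 2) : ℝ :=
  mload p σ i' (j - 1) + if i' = i then p i j else 0

/-- Anticipated cost of job `j` for choosing machine `i`, given predicted responses `r`. -/
def acost (p : Fin 2 → ℕ → ℝ) (σ : ℕ → Fin 2) (r : ℕ → Fin 2 → Fin 2) (j : ℕ) (i : Fin 2) :
    ℝ :=
  Evec p σ j i i + if r j i = i then p i (j + 1) else 0

/-- `σ` is a 1-lookahead equilibrium for jobs `1, …, n` on two machines: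
there are predicted responses `r j i` (an argmin of the follower's cost), each job
`j < n` minimizes its anticipated cost, and the last job `n` minimizes its actual cost. -/
def OneLookEq (n : ℕ) (p : Fin 2 → ℕ → ℝ) (σ : ℕ → Fin 2) : Prop :=
  ∃ r : ℕ → Fin 2 → Fin 2,
    (∀ j, 1 ≤ j → j < n →
      (∀ i i' : Fin 2,
        Evec p σ j i (r j i) + p (r j i) (j + 1) ≤ Evec p σ j i i' + p i' (j + 1)) ∧
      (∀ i : Fin 2, acost p σ r j (σ j) ≤ acost p σ r j i)) ∧
    (1 ≤ n → ∀ i : Fin 2, mload p σ (σ n) (n - 1) + p (σ n) n ≤ mload p σ i (n - 1) + p i n)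


lemma fin2_eq_of_ne (a b c : Fin 2) (hab : a ≠ b) (hca : c ≠ a) : c = b := by
  fin_cases a <;> fin_cases b <;> fin_cases c <;> simp_all

lemma mload_succ (p : Fin 2 → ℕ → ℝ) (σ : ℕ → Fin 2) (i : Fin 2) (k : ℕ) :
    mload p σ i (k + 1) = mload p σ i k + (if σ (k + 1) = i then p i (k + 1) else 0) := by
  unfold mload
  rw [Finset.sum_Icc_succ_top (by omega)]

lemma key_lemma (n : ℕ) (p : Fin 2 → ℕ → ℝ) (hp : ∀ i j, 0 ≤ p i j)
    (σ : ℕ → Fin 2) (r : ℕ → Fin 2 → Fin 2)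
    (hr : ∀ j, 1 ≤ j → j < n → ∀ i i' : Fin 2,
      Evec p σ j i (r j i) + p (r j i) (j + 1) ≤ Evec p σ j i i' + p i' (j + 1))
    (hc : ∀ j, 1 ≤ j → j < n → ∀ i : Fin 2, acost p σ r j (σ j) ≤ acost p σ r j i)
    (hlast : 1 ≤ n → ∀ i : Fin 2,
      mload p σ (σ n) (n - 1) + p (σ n) n ≤ mload p σ i (n - 1) + p i n)
    (a b : Fin 2) (hab : a ≠ b)
    (hgen1 : ∀ j, 1 ≤ j → j < n → ∀ i : Fin 2,
      Evec p σ j i a + p a (j + 1) ≠ Evec p σ j i b + p b (j + 1))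
    (hgen2 : ∀ j, 1 ≤ j → j < n → acost p σ r j a ≠ acost p σ r j b)
    (v : ℕ) (hv1 : 1 ≤ v) (hv2 : v ≤ n)
    (h : mload p σ a (v - 1) + p a v < mload p σ b (v - 1) + p b v) :
    ∃ v', v ≤ v' ∧ v' ≤ n ∧ σ v' = a := by
  by_contra hcon
  push_neg at hcon
  have hb : ∀ v', v ≤ v' → v' ≤ n → σ v' = b := fun v' h1 h2 =>
    fin2_eq_of_ne a b (σ v') hab (hcon v' h1 h2)
  have hba : b ≠ a := Ne.symm hab
  have main : ∀ k, v + k ≤ n →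
      mload p σ a (v + k - 1) + p a (v + k) < mload p σ b (v + k - 1) + p b (v + k) := by
    intro k
    induction k with
    | zero => intro _; simpa using h
    | succ k ih =>
      intro hkn
      have ihk := ih (by omega)
      obtain ⟨m, hm⟩ : ∃ m, v + k = m + 1 := ⟨v + k - 1, by omega⟩
      rw [hm] at ihk
      simp only [Nat.add_sub_cancel] at ihk
      -- ihk : mload a m + p a (m+1) < mload b m + p b (m+1)
      have hσj : σ (m + 1) = b := hb (m + 1) (by omega) (by omega)
      have h1le : 1 ≤ m + 1 := by omega
      have hltn : m + 1 < n := by omega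
      have hidx : v + (k + 1) = m + 1 + 1 := by omega
      rw [hidx]
      simp only [Nat.add_sub_cancel]
      rw [mload_succ, mload_succ, hσj, if_pos rfl, if_neg hba]
      -- goal : mload a m + 0 + p a (m+2) < mload b m + p b (m+1) + p b (m+2)
      by_cases hrb : r (m + 1) b = a
      · have h1 := hr (m + 1) h1le hltn b b
        rw [hrb] at h1
        have hne := hgen1 (m + 1) h1le hltn b
        unfold Evec at h1 hne
        simp only [Nat.add_sub_cancel, eq_self_iff_true, if_true, if_neg hab, hσj, add_zero] at h1 hne
        have := lt_of_le_of_ne h1 hne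
        linarith
      · have hrb' : r (m + 1) b = b := fin2_eq_of_ne a b _ hab hrb
        have h1 := hr (m + 1) h1le hltn b a
        rw [hrb'] at h1
        have hne := hgen1 (m + 1) h1le hltn b
        unfold Evec at h1 hne
        simp only [Nat.add_sub_cancel, eq_self_iff_true, if_true, if_neg hab, add_zero] at h1 hne
        have hstar : mload p σ b m + p b (m + 1) + p b (m + 1 + 1)
            < mload p σ a m + p a (m + 1 + 1) := lt_of_le_of_ne h1 (Ne.symm hne)
        have h2 := hc (m + 1) h1le hltn a
        rw [hσj] at h2
        have h2' : acost p σ r (m + 1) b < acost p σ r (m + 1) a :=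
          lt_of_le_of_ne h2 (Ne.symm (hgen2 (m + 1) h1le hltn))
        unfold acost Evec at h2'
        simp only [Nat.add_sub_cancel, eq_self_iff_true, if_true, hrb'] at h2'
        by_cases hra : r (m + 1) a = a
        · have h3 := hr (m + 1) h1le hltn a b
          rw [hra] at h3
          unfold Evec at h3
          simp only [Nat.add_sub_cancel, eq_self_iff_true, if_true, if_neg hba, add_zero] at h3
          have := hp a (m + 1)
          have := hp b (m + 1)
          linarith
        · have hra' : r (m + 1) a = b := fin2_eq_of_ne a b _ hab hra
          rw [hra', if_neg hba] at h2'
          have := hp b (m + 1 + 1)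
          linarith
  have hn1 : 1 ≤ n := le_trans hv1 hv2
  have hQn := main (n - v) (by omega)
  rw [show v + (n - v) = n from by omega] at hQn
  have hσn : σ n = b := hb n hv2 le_rfl
  have hl := hlast hn1 a
  rw [hσn] at hl
  linarith

/-- Let `σ` be a 1-lookahead equilibrium on two machines, witnessed by
the predicted-response function `r` (hypotheses `hr`, `hc`, `hlast`), of a *generic*
instance: in every comparison of anticipated costs made by any player (the comparisons
defining predicted responses, those defining each player's own choice, and the last
player's comparison) the two compared quantities are never equal (`hgen1`–`hgen3`).
If for some job `v`, `D₁(v−1) + p₁ᵥ < D₂(v−1) + p₂ᵥ` then some job `v' ∈ {v, …, n}`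
chooses machine 1; symmetrically with the machines interchanged.
(Machine 1 is index `0`, machine 2 is index `1`.) -/
theorem exists_later_choice_of_generic
    (n : ℕ) (p : Fin 2 → ℕ → ℝ) (hp : ∀ i j, 0 ≤ p i j)
    (σ : ℕ → Fin 2) (r : ℕ → Fin 2 → Fin 2)
    (hr : ∀ j, 1 ≤ j → j < n → ∀ i i' : Fin 2,
      Evec p σ j i (r j i) + p (r j i) (j + 1) ≤ Evec p σ j i i' + p i' (j + 1))
    (hc : ∀ j, 1 ≤ j → j < n → ∀ i : Fin 2, acost p σ r j (σ j) ≤ acost p σ r j i)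
    (hlast : 1 ≤ n → ∀ i : Fin 2,
      mload p σ (σ n) (n - 1) + p (σ n) n ≤ mload p σ i (n - 1) + p i n)
    (hgen1 : ∀ j, 1 ≤ j → j < n → ∀ i : Fin 2,
      Evec p σ j i 0 + p 0 (j + 1) ≠ Evec p σ j i 1 + p 1 (j + 1))
    (hgen2 : ∀ j, 1 ≤ j → j < n → acost p σ r j 0 ≠ acost p σ r j 1)
    (hgen3 : 1 ≤ n → mload p σ 0 (n - 1) + p 0 n ≠ mload p σ 1 (n - 1) + p 1 n)
    (v : ℕ) (hv1 : 1 ≤ v) (hv2 : v ≤ n) :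
    (mload p σ 0 (v - 1) + p 0 v < mload p σ 1 (v - 1) + p 1 v →
      ∃ v', v ≤ v' ∧ v' ≤ n ∧ σ v' = 0) ∧
    (mload p σ 1 (v - 1) + p 1 v < mload p σ 0 (v - 1) + p 0 v →
      ∃ v', v ≤ v' ∧ v' ≤ n ∧ σ v' = 1) := by
  constructor
  · intro h
    exact key_lemma n p hp σ r hr hc hlast 0 1 (by decide) hgen1 hgen2 v hv1 hv2 h
  · intro h
    exact key_lemma n p hp σ r hr hc hlast 1 0 (by decide)
      (fun j h1 h2 i => Ne.symm (hgen1 j h1 h2 i))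
      (fun j h1 h2 => Ne.symm (hgen2 j h1 h2)) v hv1 hv2 h
end
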